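/- For 1 < p < 2 and all complex numbers z, w, the integral ∫₀^∞ t^{p−1} L(z/t, w/t) dt equals β_p Φ_p(z,w), where β_p = (½ p (2−p) α_p)^{−1}. -/

import Mathlib

open MeasureTheory

/-- The Burkholder–Šverák function L. -/
noncomputable def L (z w : ℂ) : ℝ :=
  if ‖z‖ + ‖w‖ ≤ 1 then (‖z‖) ^ 2 - (‖w‖) ^ 2
  else 2 * ‖z‖ - 1

/-- p* = max(p, p'). -/
noncomputable def pstar (p : ℝ) : ℝ := max p (p / (p - 1))

/-- Burkholder's constant α_p. -/
noncomputable def alphap (p : ℝ) : ℝ := p * (1 - 1 / pstar p) ^ (p - 1)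

/-- Burkholder's function Φ_p. -/
noncomputable def Phip (p : ℝ) (z w : ℂ) : ℝ :=
  alphap p * ((pstar p - 1) * ‖z‖ - ‖w‖) *
    (‖z‖ + ‖w‖) ^ (p - 1)

/-- For 1 < p < 2, ∫₀^∞ t^{p−1} L(z/t, w/t) dt = β_p Φ_p(z,w). -/
theorem stmt1 (p : ℝ) (hp1 : 1 < p) (hp2 : p < 2) (z w : ℂ) :
    (∫ t in Set.Ioi (0 : ℝ), t ^ (p - 1) * L (z / (t : ℂ)) (w / (t : ℂ)))
      = ((1 / 2) * p * (2 - p) * alphap p)⁻¹ * Phip p z w := by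
  have hp0 : 0 < p := by linarith
  have hp1' : (0:ℝ) < p - 1 := by linarith
  have hps : pstar p = p / (p - 1) := by
    rw [pstar, max_eq_right]
    rw [le_div_iff₀ hp1']
    nlinarith
  have hα : 0 < alphap p := by
    rw [alphap, hps]
    have h1 : (1:ℝ) - 1 / (p / (p - 1)) = 1 / p := by
      rw [one_div, inv_div]
      field_simp
      ring
    rw [h1]
    positivity
  set a := ‖z‖ with ha
  set b := ‖w‖ with hb
  have ha0 : 0 ≤ a := norm_nonneg z
  have hb0 : 0 ≤ b := norm_nonneg w
  -- pointwise formula for positive t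
  have habs : ∀ t : ℝ, 0 < t → ‖z / (t:ℂ)‖ = a / t ∧ ‖w / (t:ℂ)‖ = b / t := by
    intro t ht
    rw [norm_div, norm_div, Complex.norm_real, Real.norm_eq_abs, abs_of_pos ht]
    exact ⟨rfl, rfl⟩
  by_cases hs0 : a + b = 0
  · have haz : a = 0 := by linarith [ha0, hb0]
    have hbz : b = 0 := by linarith [ha0, hb0]
    have : ∀ t ∈ Set.Ioi (0:ℝ), t ^ (p-1) * L (z / (t:ℂ)) (w / (t:ℂ)) = 0 := by
      intro t ht
      obtain ⟨h1, h2⟩ := habs t ht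
      rw [L, h1, h2, haz, hbz]
      norm_num
    rw [setIntegral_congr_fun measurableSet_Ioi this, integral_zero, Phip, ← ha, ← hb, hs0,
      Real.zero_rpow (by linarith : p - 1 ≠ 0)]
    ring
  · have hs : 0 < a + b := lt_of_le_of_ne (by positivity) (Ne.symm hs0)
    set s := a + b with hsdef
    -- the two nice formulas
    have hIoo : ∀ t ∈ Set.Ioo (0:ℝ) s, t ^ (p-1) * L (z / (t:ℂ)) (w / (t:ℂ))
        = 2 * a * t ^ (p - 2) - t ^ (p - 1) := by
      intro t ht
      obtain ⟨ht0, hts⟩ := ht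
      obtain ⟨h1, h2⟩ := habs t ht0
      have e1 : t ^ (p-2) = t ^ (p-1) / t := by
        rw [← Real.rpow_sub_one ht0.ne']
        congr 1
        ring
      rw [L, h1, h2, if_neg, e1]
      · ring
      · rw [← add_div, div_le_one ht0]
        push_neg
        exact hts
    have hIci : ∀ t ∈ Set.Ici s, t ^ (p-1) * L (z / (t:ℂ)) (w / (t:ℂ))
        = (a ^ 2 - b ^ 2) * t ^ (p - 3) := by
      intro t ht
      have ht0 : 0 < t := lt_of_lt_of_le hs ht
      obtain ⟨h1, h2⟩ := habs t ht0
      rw [L, h1, h2, if_pos]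
      · have e2 : t ^ (p-3) = t ^ (p-1) / t ^ 2 := by
          rw [← Real.rpow_natCast t 2, ← Real.rpow_sub ht0]
          congr 1
          push_cast
          ring
        rw [div_pow, div_pow, e2]
        ring
      · rw [← add_div, div_le_one ht0]
        exact ht
    -- integrability
    have hg1 : IntegrableOn (fun t => 2 * a * t ^ (p - 2) - t ^ (p - 1)) (Set.Ioo 0 s) := by
      have i1 := (intervalIntegral.intervalIntegrable_rpow' (a := 0) (b := s) (r := p-2)
        (by linarith)).const_mul (2*a)
      have i2 := intervalIntegral.intervalIntegrable_rpow' (a := 0) (b := s) (r := p-1)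
        (by linarith)
      have := i1.sub i2
      rwa [intervalIntegrable_iff_integrableOn_Ioo_of_le hs.le] at this
    have hfIoc : IntegrableOn (fun t : ℝ => t ^ (p-1) * L (z / (t:ℂ)) (w / (t:ℂ))) (Set.Ioc 0 s) := by
      rw [integrableOn_Ioc_iff_integrableOn_Ioo]
      exact hg1.congr_fun (fun t ht => (hIoo t ht).symm) measurableSet_Ioo
    have hg2 : IntegrableOn (fun t => (a ^ 2 - b ^ 2) * t ^ (p - 3)) (Set.Ioi s) :=
      (integrableOn_Ioi_rpow_of_lt (by linarith) hs).const_mul _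
    have hfIoi : IntegrableOn (fun t : ℝ => t ^ (p-1) * L (z / (t:ℂ)) (w / (t:ℂ))) (Set.Ioi s) :=
      hg2.congr_fun (fun t (ht : t ∈ Set.Ioi s) => (hIci t (Set.mem_Ici.mpr (le_of_lt ht))).symm) measurableSet_Ioi
    -- split
    rw [← Set.Ioc_union_Ioi_eq_Ioi hs.le,
      setIntegral_union Set.Ioc_disjoint_Ioi_same measurableSet_Ioi hfIoc hfIoi]
    -- first piece
    have P1 : (∫ t in Set.Ioc (0:ℝ) s, t ^ (p-1) * L (z / (t:ℂ)) (w / (t:ℂ)))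
        = 2 * a * (s ^ (p-1) / (p-1)) - s ^ p / p := by
      rw [integral_Ioc_eq_integral_Ioo, setIntegral_congr_fun measurableSet_Ioo hIoo,
        ← integral_Ioc_eq_integral_Ioo, ← intervalIntegral.integral_of_le hs.le]
      rw [intervalIntegral.integral_sub ((intervalIntegral.intervalIntegrable_rpow'
          (by linarith)).const_mul (2*a)) (intervalIntegral.intervalIntegrable_rpow' (by linarith)),
        intervalIntegral.integral_const_mul, integral_rpow (Or.inl (by linarith)),
        integral_rpow (Or.inl (by linarith))]
      rw [Real.zero_rpow (by linarith : p - 2 + 1 ≠ 0), Real.zero_rpow (by linarith : p - 1 + 1 ≠ 0),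
        show p - 2 + 1 = p - 1 by ring, show p - 1 + 1 = p by ring]
      ring
    -- second piece
    have P2 : (∫ t in Set.Ioi s, t ^ (p-1) * L (z / (t:ℂ)) (w / (t:ℂ)))
        = (a ^ 2 - b ^ 2) * (-(s ^ (p-2)) / (p-2)) := by
      rw [setIntegral_congr_fun measurableSet_Ioi
          (fun t ht => hIci t (le_of_lt ht)), integral_const_mul,
        integral_Ioi_rpow_of_lt (by linarith) hs]
      rw [show p - 3 + 1 = p - 2 by ring]
    rw [P1, P2, Phip, ← ha, ← hb, hps, ← hsdef]
    have E1 : s ^ p = s ^ (p-1) * s := by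
      rw [← Real.rpow_add_one hs.ne']
      congr 1
      ring
    have E2 : s ^ (p-2) = s ^ (p-1) / s := by
      rw [← Real.rpow_sub_one hs.ne']
      congr 1
      ring
    rw [E1, E2, hsdef]
    have hαp : alphap p ≠ 0 := ne_of_gt hα
    have h2p : (2:ℝ) - p ≠ 0 := by linarith
    have hp1n : p - 1 ≠ 0 := by linarith
    have hp2n : p - 2 ≠ 0 := by linarith
    have habne : a + b ≠ 0 := hs0
    field_simp
    ring
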